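/- Convergence of the averaged (expected-update) Survival Q-learning iteration (deterministic counterpart of Theorem 2): let (α_k) be a sequence in [0,1] with ∑_{k=0}^∞ α_k = ∞, let Q^0 : S × A → ℝ be bounded measurable, and define Q^{k+1} = (1 − α_k) · Q^k + α_k · T(Q^k). Then ‖Q^k − J*‖∞ ≤ (∏_{j<k} (1 − α_j(1 − γ))) · ‖Q^0 − J*‖∞ for every k, and ‖Q^k − J*‖∞ → 0 as k → ∞, where J* is the unique bounded measurable fixed point of T. -/
import Mathlib


open MeasureTheory ProbabilityTheory Filter

/-- Sup norm of a function on state-action pairs. -/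
noncomputable def supNorm {S A : Type*} (J : S × A → ℝ) : ℝ := ⨆ sa, |J sa|

/-- Policy-evaluation operator `T_π`. -/
noncomputable def Tpol {S A : Type*} [MeasurableSpace S] [MeasurableSpace A]
    (p : ProbabilityTheory.Kernel (S × A) S) (pol : ProbabilityTheory.Kernel S A)
    (R : S → Bool) (h : S × A → ℝ) (J : S × A → ℝ) : S × A → ℝ :=
  fun sa => if R sa.1 = true then 1
    else (1 - h sa) * ∫ s', (∫ a', J (s', a') ∂(pol s')) ∂(p sa)

/-- Bellman optimality operator `T`. -/
noncomputable def Topt {S A : Type*} [MeasurableSpace S] [MeasurableSpace A]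
    [Fintype A] [Nonempty A]
    (p : ProbabilityTheory.Kernel (S × A) S)
    (R : S → Bool) (h : S × A → ℝ) (J : S × A → ℝ) : S × A → ℝ :=
  fun sa => if R sa.1 = true then 1
    else (1 - h sa) * ∫ s', (Finset.univ.sup' Finset.univ_nonempty fun a' => J (s', a')) ∂(p sa)

section aux
variable {S A : Type*} [MeasurableSpace S] [MeasurableSpace A] [Fintype A] [Nonempty A]

lemma maxQ_meas (J : S × A → ℝ) (hJ : Measurable J) :
    Measurable fun s' => Finset.univ.sup' Finset.univ_nonempty fun a' => J (s', a') := by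
  have : (fun s' => Finset.univ.sup' Finset.univ_nonempty fun a' => J (s', a'))
      = Finset.univ.sup' Finset.univ_nonempty (fun a' s' => J (s', a')) := by
    ext s'
    exact (Finset.sup'_apply (f := fun a' (s' : S) => J (s', a')) Finset.univ_nonempty s').symm
  rw [this]
  exact Finset.measurable_sup' _ fun a _ => hJ.comp (measurable_id.prodMk measurable_const)

omit [MeasurableSpace S] [MeasurableSpace A] in
lemma maxQ_abs_le (J : S × A → ℝ) (C : ℝ) (hC : ∀ sa, |J sa| ≤ C) (s' : S) :
    |Finset.univ.sup' Finset.univ_nonempty fun a' => J (s', a')| ≤ C := by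
  rw [abs_le]
  constructor
  · have a := Classical.arbitrary A
    exact le_trans (abs_le.1 (hC (s', a))).1 (Finset.le_sup' (fun a' => J (s', a')) (Finset.mem_univ a))
  · exact Finset.sup'_le _ _ fun a _ => (abs_le.1 (hC (s', a))).2

variable (p : ProbabilityTheory.Kernel (S × A) S) [IsMarkovKernel p]
    (R : S → Bool) (hR : Measurable R)
    (h : S × A → ℝ)

lemma maxQ_integrable (J : S × A → ℝ) (hJ : Measurable J) (C : ℝ) (hC : ∀ sa, |J sa| ≤ C)
    (sa : S × A) :
    Integrable (fun s' => Finset.univ.sup' Finset.univ_nonempty fun a' => J (s', a')) (p sa) := by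
  refine (integrable_const C).mono' (maxQ_meas J hJ).aestronglyMeasurable ?_
  exact Eventually.of_forall fun s' => by
    simpa using maxQ_abs_le J C hC s'

omit hR in
lemma Topt_meas (hRm : Measurable R) (hh : Measurable h) (J : S × A → ℝ) (hJ : Measurable J) :
    Measurable (Topt p R h J) := by
  have hI : Measurable fun sa : S × A =>
      ∫ s', (Finset.univ.sup' Finset.univ_nonempty fun a' => J (s', a')) ∂(p sa) := by
    have := (StronglyMeasurable.integral_kernel_prod_right' (κ := p)
      (f := fun x : (S × A) × S =>
        Finset.univ.sup' Finset.univ_nonempty fun a' => J (x.2, a'))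
      (((maxQ_meas J hJ).comp measurable_snd).stronglyMeasurable))
    exact this.measurable
  have hset : MeasurableSet {sa : S × A | R sa.1 = true} :=
    (hRm.comp measurable_fst) (measurableSet_singleton true)
  exact Measurable.ite hset measurable_const (((measurable_const.sub hh)).mul hI)

omit hR in
lemma Topt_bound (hh01 : ∀ sa, 0 ≤ h sa ∧ h sa ≤ 1)
    (J : S × A → ℝ) (hJ : Measurable J) (C : ℝ) (hC : ∀ sa, |J sa| ≤ C)
    (sa : S × A) : |Topt p R h J sa| ≤ max 1 C := by
  unfold Topt
  by_cases hRs : R sa.1 = true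
  · rw [if_pos hRs, abs_one]
    exact le_max_left 1 C
  · rw [if_neg hRs]
    rw [abs_mul]
    have h1 : |1 - h sa| ≤ 1 := by
      have := hh01 sa; rw [abs_le]; constructor <;> linarith [this.1, this.2]
    have h2 : |∫ s', (Finset.univ.sup' Finset.univ_nonempty fun a' => J (s', a')) ∂(p sa)| ≤ C := by
      have := norm_integral_le_of_norm_le_const (μ := p sa)
        (f := fun s' => Finset.univ.sup' Finset.univ_nonempty fun a' => J (s', a'))
        (C := C) (Eventually.of_forall fun s' => by simpa using maxQ_abs_le J C hC s')
      simpa using this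
    calc |1 - h sa| * |_| ≤ 1 * C := by
          apply mul_le_mul h1 h2 (abs_nonneg _) zero_le_one
      _ ≤ max 1 C := by rw [one_mul]; exact le_max_right 1 C

omit hR in
lemma Topt_contract (hh01 : ∀ sa, 0 ≤ h sa ∧ h sa ≤ 1) (δ : ℝ) (hδ1 : δ ≤ 1) (hhaz : ∀ sa, R sa.1 = false → δ ≤ h sa)
    (J1 J2 : S × A → ℝ) (hJ1 : Measurable J1) (hJ2 : Measurable J2)
    (C1 : ℝ) (hC1 : ∀ sa, |J1 sa| ≤ C1) (C2 : ℝ) (hC2 : ∀ sa, |J2 sa| ≤ C2)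
    (D : ℝ) (hD : ∀ sa, |J1 sa - J2 sa| ≤ D)
    (sa : S × A) : |Topt p R h J1 sa - Topt p R h J2 sa| ≤ (1 - δ) * D := by
  have hD0 : 0 ≤ D := le_trans (abs_nonneg _) (hD sa)
  unfold Topt
  by_cases hRs : R sa.1 = true
  · rw [if_pos hRs, if_pos hRs, sub_self, abs_zero]
    exact mul_nonneg (by linarith) hD0
  · have hRf : R sa.1 = false := Bool.eq_false_iff.2 hRs
    have hδh := hhaz sa hRf
    have hδ0' : 0 ≤ 1 - δ := by linarith [(hh01 sa).2]
    rw [if_neg hRs, if_neg hRs]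
    have hkey : ∀ s' : S, |(Finset.univ.sup' Finset.univ_nonempty fun a' => J1 (s', a'))
        - (Finset.univ.sup' Finset.univ_nonempty fun a' => J2 (s', a'))| ≤ D := by
      intro s'
      rw [abs_sub_le_iff]
      constructor
      · rw [sub_le_iff_le_add]
        refine Finset.sup'_le _ _ fun a _ => ?_
        have := (abs_le.1 (hD (s', a))).2
        have h2 : J2 (s', a) ≤ Finset.univ.sup' Finset.univ_nonempty fun a' => J2 (s', a') :=
          Finset.le_sup' (fun a' => J2 (s', a')) (Finset.mem_univ a)
        linarith
      · rw [sub_le_iff_le_add]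
        refine Finset.sup'_le _ _ fun a _ => ?_
        have := (abs_le.1 (hD (s', a))).1
        have h1 : J1 (s', a) ≤ Finset.univ.sup' Finset.univ_nonempty fun a' => J1 (s', a') :=
          Finset.le_sup' (fun a' => J1 (s', a')) (Finset.mem_univ a)
        linarith
    have hi1 := maxQ_integrable p J1 hJ1 C1 hC1 sa
    have hi2 := maxQ_integrable p J2 hJ2 C2 hC2 sa
    rw [← mul_sub, ← integral_sub hi1 hi2, abs_mul]
    have hInt : |∫ s', ((Finset.univ.sup' Finset.univ_nonempty fun a' => J1 (s', a'))
        - (Finset.univ.sup' Finset.univ_nonempty fun a' => J2 (s', a'))) ∂(p sa)| ≤ D := by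
      have := norm_integral_le_of_norm_le_const (μ := p sa)
        (f := fun s' => (Finset.univ.sup' Finset.univ_nonempty fun a' => J1 (s', a'))
          - (Finset.univ.sup' Finset.univ_nonempty fun a' => J2 (s', a'))) (C := D)
        (Eventually.of_forall fun s' => by simpa using hkey s')
      simpa using this
    have habs : |1 - h sa| ≤ 1 - δ := by
      rw [abs_le]; constructor <;> linarith [(hh01 sa).1, (hh01 sa).2]
    exact mul_le_mul habs hInt (abs_nonneg _) hδ0'

end aux

theorem stmt_18
    {S A : Type*} [MeasurableSpace S] [MeasurableSpace A]
    [Fintype A] [Nonempty A] [MeasurableSingletonClass A]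
    (p : ProbabilityTheory.Kernel (S × A) S) [IsMarkovKernel p]
    (R : S → Bool) (hR : Measurable R)
    (h : S × A → ℝ) (hh : Measurable h) (hh01 : ∀ sa, 0 ≤ h sa ∧ h sa ≤ 1)
    (δ : ℝ) (hδ0 : 0 < δ) (hδ1 : δ ≤ 1) (hhaz : ∀ sa, R sa.1 = false → δ ≤ h sa)
    (γ : ℝ) (hγ : γ = 1 - δ)
    (Jstar : S × A → ℝ) (hJsm : Measurable Jstar) (hJsb : ∃ C, ∀ sa, |Jstar sa| ≤ C)
    (hfix : Topt p R h Jstar = Jstar)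
    (α : ℕ → ℝ) (hα : ∀ k, 0 ≤ α k ∧ α k ≤ 1)
    (hdiv : Tendsto (fun n : ℕ => ∑ k ∈ Finset.range n, α k) atTop atTop)
    (Q : ℕ → S × A → ℝ) (hQ0m : Measurable (Q 0)) (hQ0b : ∃ C, ∀ sa, |Q 0 sa| ≤ C)
    (hrec : ∀ k : ℕ, Q (k + 1) =
      fun sa => (1 - α k) * Q k sa + α k * Topt p R h (Q k) sa) :
    (∀ k : ℕ, supNorm (Q k - Jstar) ≤
        (∏ j ∈ Finset.range k, (1 - α j * (1 - γ))) * supNorm (Q 0 - Jstar)) ∧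
      Tendsto (fun k : ℕ => supNorm (Q k - Jstar)) atTop (nhds 0) := by

  -- invariant: measurability and boundedness of each Q k
  have hinv : ∀ k, Measurable (Q k) ∧ ∃ C, ∀ sa, |Q k sa| ≤ C := by
    intro k
    induction k with
    | zero => exact ⟨hQ0m, hQ0b⟩
    | succ k ih =>
      obtain ⟨hm, C, hC⟩ := ih
      constructor
      · rw [hrec k]
        exact (measurable_const.mul hm).add
          (measurable_const.mul (Topt_meas p R h hR hh (Q k) hm))
      · refine ⟨(1 - α k) * C + α k * max 1 C, fun sa => ?_⟩
        rw [hrec k]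
        have h1 : |(1 - α k) * Q k sa| ≤ (1 - α k) * C := by
          rw [abs_mul, abs_of_nonneg (by linarith [(hα k).2])]
          exact mul_le_mul_of_nonneg_left (hC sa) (by linarith [(hα k).2])
        have h2 : |α k * Topt p R h (Q k) sa| ≤ α k * max 1 C := by
          rw [abs_mul, abs_of_nonneg (hα k).1]
          exact mul_le_mul_of_nonneg_left
            (Topt_bound p R h hh01 (Q k) hm C hC sa) (hα k).1
        calc |(1 - α k) * Q k sa + α k * Topt p R h (Q k) sa|
            ≤ |(1 - α k) * Q k sa| + |α k * Topt p R h (Q k) sa| := abs_add_le _ _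
          _ ≤ (1 - α k) * C + α k * max 1 C := add_le_add h1 h2
  obtain ⟨Cs, hCs⟩ := hJsb
  have hδγ : 1 - γ = δ := by rw [hγ]; ring
  -- nonnegativity of each product factor
  have hfac : ∀ j, 0 ≤ 1 - α j * (1 - γ) := by
    intro j
    rw [hδγ]
    nlinarith [(hα j).1, (hα j).2, hδ0, hδ1]
  have hprod : ∀ k, 0 ≤ ∏ j ∈ Finset.range k, (1 - α j * (1 - γ)) :=
    fun k => Finset.prod_nonneg fun j _ => hfac j
  rcases isEmpty_or_nonempty (S × A) with hemp | hne
  · have hz : ∀ k, supNorm (Q k - Jstar) = 0 := fun k => Real.iSup_of_isEmpty _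
    constructor
    · intro k; rw [hz k, hz 0, mul_zero]
    · simp only [hz]; exact tendsto_const_nhds
  -- main case
  · -- sup norm bound: each |Q k - Jstar| is bounded and achieves the inequality
    have hDb : ∀ k, ∀ sa, |(Q k - Jstar) sa| ≤ supNorm (Q k - Jstar) := by
      intro k sa
      obtain ⟨_, C, hC⟩ := hinv k
      unfold supNorm
      refine le_ciSup (f := fun sb => |(Q k - Jstar) sb|) ⟨C + Cs, ?_⟩ sa
      rintro x ⟨sb, rfl⟩
      calc |(Q k - Jstar) sb| = |Q k sb - Jstar sb| := by simp [Pi.sub_apply]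
        _ ≤ |Q k sb| + |Jstar sb| := abs_sub _ _
        _ ≤ C + Cs := add_le_add (hC sb) (hCs sb)
    have hD0 : ∀ k, 0 ≤ supNorm (Q k - Jstar) := by
      intro k; unfold supNorm; exact Real.iSup_nonneg fun sa => abs_nonneg _
    -- one-step contraction
    have hstep : ∀ k, supNorm (Q (k + 1) - Jstar) ≤
        (1 - α k * (1 - γ)) * supNorm (Q k - Jstar) := by
      intro k
      obtain ⟨hm, C, hC⟩ := hinv k
      rw [show supNorm (Q (k + 1) - Jstar) = ⨆ sa, |(Q (k + 1) - Jstar) sa| from rfl]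
      refine ciSup_le fun sa => ?_
      have hTc := Topt_contract p R h hh01 δ hδ1 hhaz (Q k) Jstar hm hJsm C hC Cs hCs
        (supNorm (Q k - Jstar)) (fun sb => by simpa [Pi.sub_apply] using hDb k sb) sa
      have hTfix : Topt p R h Jstar sa = Jstar sa := congrFun hfix sa
      have hexp : (Q (k + 1) - Jstar) sa
          = (1 - α k) * (Q k sa - Jstar sa)
            + α k * (Topt p R h (Q k) sa - Topt p R h Jstar sa) := by
        simp only [Pi.sub_apply, hrec k, hTfix]
        ring
      rw [hexp]
      have h1 : |(1 - α k) * (Q k sa - Jstar sa)|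
          ≤ (1 - α k) * supNorm (Q k - Jstar) := by
        rw [abs_mul, abs_of_nonneg (by linarith [(hα k).2])]
        exact mul_le_mul_of_nonneg_left (by simpa [Pi.sub_apply] using hDb k sa)
          (by linarith [(hα k).2])
      have h2 : |α k * (Topt p R h (Q k) sa - Topt p R h Jstar sa)|
          ≤ α k * ((1 - δ) * supNorm (Q k - Jstar)) := by
        rw [abs_mul, abs_of_nonneg (hα k).1]
        exact mul_le_mul_of_nonneg_left hTc (hα k).1
      calc |(1 - α k) * (Q k sa - Jstar sa)
            + α k * (Topt p R h (Q k) sa - Topt p R h Jstar sa)|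
          ≤ _ + _ := abs_add_le _ _
        _ ≤ (1 - α k) * supNorm (Q k - Jstar)
            + α k * ((1 - δ) * supNorm (Q k - Jstar)) := add_le_add h1 h2
        _ = (1 - α k * (1 - γ)) * supNorm (Q k - Jstar) := by rw [hδγ]; ring
    -- part 1
    have part1 : ∀ k : ℕ, supNorm (Q k - Jstar) ≤
        (∏ j ∈ Finset.range k, (1 - α j * (1 - γ))) * supNorm (Q 0 - Jstar) := by
      intro k
      induction k with
      | zero => simp
      | succ k ih =>
        calc supNorm (Q (k + 1) - Jstar)
            ≤ (1 - α k * (1 - γ)) * supNorm (Q k - Jstar) := hstep k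
          _ ≤ (1 - α k * (1 - γ))
              * ((∏ j ∈ Finset.range k, (1 - α j * (1 - γ))) * supNorm (Q 0 - Jstar)) :=
              mul_le_mul_of_nonneg_left ih (hfac k)
          _ = (∏ j ∈ Finset.range (k + 1), (1 - α j * (1 - γ))) * supNorm (Q 0 - Jstar) := by
              rw [Finset.prod_range_succ]; ring
    refine ⟨part1, ?_⟩
    -- the product tends to zero
    have hPle : ∀ k, (∏ j ∈ Finset.range k, (1 - α j * (1 - γ)))
        ≤ Real.exp (-((1 - γ) * ∑ j ∈ Finset.range k, α j)) := by
      intro k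
      have : ∀ j ∈ Finset.range k, (1 - α j * (1 - γ)) ≤ Real.exp (-(α j * (1 - γ))) := by
        intro j _
        have := Real.add_one_le_exp (-(α j * (1 - γ)))
        linarith
      calc (∏ j ∈ Finset.range k, (1 - α j * (1 - γ)))
          ≤ ∏ j ∈ Finset.range k, Real.exp (-(α j * (1 - γ))) :=
            Finset.prod_le_prod (fun j _ => hfac j) this
        _ = Real.exp (∑ j ∈ Finset.range k, -(α j * (1 - γ))) := (Real.exp_sum _ _).symm
        _ = Real.exp (-((1 - γ) * ∑ j ∈ Finset.range k, α j)) := by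
            congr 1
            rw [Finset.mul_sum, ← Finset.sum_neg_distrib]
            exact Finset.sum_congr rfl fun j _ => by ring
    have hexp0 : Tendsto (fun k : ℕ =>
        Real.exp (-((1 - γ) * ∑ j ∈ Finset.range k, α j))) atTop (nhds 0) := by
      apply Real.tendsto_exp_atBot.comp
      have h1 : Tendsto (fun k : ℕ => (1 - γ) * ∑ j ∈ Finset.range k, α j) atTop atTop :=
        (tendsto_const_mul_atTop_of_pos (by rw [hδγ]; exact hδ0)).2 hdiv
      exact tendsto_neg_atBot_iff.2 h1
    have hP0 : Tendsto (fun k : ℕ =>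
        ∏ j ∈ Finset.range k, (1 - α j * (1 - γ))) atTop (nhds 0) :=
      squeeze_zero hprod hPle hexp0
    have hlim : Tendsto (fun k : ℕ =>
        (∏ j ∈ Finset.range k, (1 - α j * (1 - γ))) * supNorm (Q 0 - Jstar))
        atTop (nhds 0) := by
      simpa using hP0.mul_const (supNorm (Q 0 - Jstar))
    exact squeeze_zero hD0 part1 hlim
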